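/- Let (P, w) be a decision list of length n over α and (Q, v) a decision list of length m over α, both total at every x : α, and form the combined decision list over Fin n × Fin m ordered lexicographically, whose rule (i, j) has body P i x ∧ Q j x. Then for every x : α and every pair (i, j): rule (i, j) is active at x in the combined list if and only if rule i is active at x in the first list and rule j is active at x in the second list. -/
import Mathlib


/-- The lexicographic order on `Fin n × Fin m`: `(i, j) < (i', j')` iff `i < i'`, or
`i = i'` and `j < j'`. -/
def lexLT {n m : ℕ} (p q : Fin n × Fin m) : Prop :=
  p.1 < q.1 ∨ (p.1 = q.1 ∧ p.2 < q.2)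

/-- Let `(P, w)` and `(Q, v)` be decision lists over `α`, both total at every `x`, and
form the combined decision list over `Fin n × Fin m` ordered lexicographically, whose
rule `(i, j)` has body `P i x ∧ Q j x`.  Then rule `(i, j)` is active at `x` in the
combined list iff rule `i` is active at `x` in the first list and rule `j` is active
at `x` in the second list. -/
theorem combined_rule_active_iff
    {α : Type*} {n m : ℕ}
    (P : Fin n → α → Prop) (w : Fin n → ℝ)
    (Q : Fin m → α → Prop) (v : Fin m → ℝ)
    (hP : ∀ x : α, ∃ i, P i x) (hQ : ∀ x : α, ∃ j, Q j x) :
    ∀ (x : α) (i : Fin n) (j : Fin m),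
      ((P i x ∧ Q j x) ∧
          ∀ q : Fin n × Fin m, lexLT q (i, j) → ¬ (P q.1 x ∧ Q q.2 x)) ↔
        ((P i x ∧ ∀ k < i, ¬ P k x) ∧ (Q j x ∧ ∀ k < j, ¬ Q k x)) := by
  intro x i j
  constructor
  · rintro ⟨⟨hPi, hQj⟩, hmin⟩
    refine ⟨⟨hPi, fun k hk hPk => ?_⟩, ⟨hQj, fun k hk hQk => ?_⟩⟩
    · obtain ⟨j', hj'⟩ := hQ x
      exact hmin (k, j') (Or.inl hk) ⟨hPk, hj'⟩
    · exact hmin (i, k) (Or.inr ⟨rfl, hk⟩) ⟨hPi, hQk⟩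
  · rintro ⟨⟨hPi, hi⟩, ⟨hQj, hj⟩⟩
    refine ⟨⟨hPi, hQj⟩, fun q hq ⟨hq1, hq2⟩ => ?_⟩
    rcases hq with h | ⟨h, h2⟩
    · exact hi q.1 h hq1
    · exact hj q.2 h2 hq2
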